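/- Let q, λ ∈ ℂ with |q| < 1, λ ≠ 0, 1 + λ² ≠ 0, and λ²q^k ≠ 1 for all integers k ≥ 1. Define c_k = (−λ²;q²)_k q^{3k} / ((q;q)_k (λ²q;q)_k) for k ≥ 0, and for each integer w ≥ −1 set S(w) = λ^w Σ_{k=0}^∞ c_k q^{kw} (this series converges absolutely). Then for every integer w ≥ 1: S(w) − ((1+λ²)/λ) S(w−1) + S(w−2) = q^{w+1} (S(w) + S(w−2)). -/

import Mathlib

/-!
STATEMENT 11: the series ansatz `S(w) = λ^w Σ_k c_k q^{kw}` with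
`c_k = (-λ²;q²)_k q^{3k} / ((q;q)_k (λ²q;q)_k)` solves the rescaled recurrence
`S(w) - (1/α) S(w-1) + S(w-2) = q^{w+1}(S(w) + S(w-2))` in the q-tangent case.
-/

/-- The `q`-Pochhammer symbol `(a;q)_k = ∏_{j=0}^{k-1} (1 - a q^j)`. -/
noncomputable def qPoch (a q : ℂ) (k : ℕ) : ℂ := ∏ j ∈ Finset.range k, (1 - a * q ^ j)

/-- `c_k = (-λ²;q²)_k q^{3k} / ((q;q)_k (λ²q;q)_k)`. -/
noncomputable def cTan (q lam : ℂ) (k : ℕ) : ℂ :=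
  qPoch (-lam ^ 2) (q ^ 2) k * q ^ (3 * k) / (qPoch q q k * qPoch (lam ^ 2 * q) q k)

/-- `S(w) = λ^w Σ_{k=0}^∞ c_k q^{kw}`, for integer `w` (in particular `w ≥ -1`). -/
noncomputable def STan (q lam : ℂ) (w : ℤ) : ℂ :=
  lam ^ w * ∑' k : ℕ, cTan q lam k * q ^ ((k : ℤ) * w)

open Filter Topology

lemma one_sub_q_pow_ne {q : ℂ} (hq : ‖q‖ < 1) (j : ℕ) (hj : 1 ≤ j) :
    (1 : ℂ) - q ^ j ≠ 0 := by
  intro h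
  have h1 : q ^ j = 1 := by linear_combination -h
  have h2 : ‖q ^ j‖ < 1 := by
    rw [norm_pow]
    exact pow_lt_one₀ (norm_nonneg q) hq (by omega)
  rw [h1] at h2; simp at h2

lemma one_sub_lamq_ne {q lam : ℂ} (hk : ∀ k : ℕ, 1 ≤ k → lam ^ 2 * q ^ k ≠ 1) (j : ℕ)
    (hj : 1 ≤ j) : (1 : ℂ) - lam ^ 2 * q ^ j ≠ 0 := by
  intro h
  exact hk j hj (by linear_combination -h)

lemma qPoch_q_ne {q : ℂ} (hq : ‖q‖ < 1) (k : ℕ) : qPoch q q k ≠ 0 := by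
  rw [qPoch]
  apply Finset.prod_ne_zero_iff.2
  intro j _
  have h := one_sub_q_pow_ne hq (j + 1) (by omega)
  rw [pow_succ'] at h
  exact h

lemma qPoch_lam_ne {q lam : ℂ} (hk : ∀ k : ℕ, 1 ≤ k → lam ^ 2 * q ^ k ≠ 1) (k : ℕ) :
    qPoch (lam ^ 2 * q) q k ≠ 0 := by
  rw [qPoch]
  apply Finset.prod_ne_zero_iff.2
  intro j _
  have h := one_sub_lamq_ne hk (j + 1) (by omega)
  intro h0
  apply h
  rw [pow_succ']
  linear_combination h0

lemma cTan_succ {q lam : ℂ} (hq : ‖q‖ < 1)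
    (hk : ∀ k : ℕ, 1 ≤ k → lam ^ 2 * q ^ k ≠ 1) (k : ℕ) :
    cTan q lam (k + 1) * ((1 - q ^ (k + 1)) * (1 - lam ^ 2 * q ^ (k + 1)))
      = cTan q lam k * (1 + lam ^ 2 * q ^ (2 * k)) * q ^ 3 := by
  have h1 := qPoch_q_ne hq k
  have h2 := qPoch_lam_ne hk k
  have hA := one_sub_q_pow_ne hq (k + 1) (by omega)
  have hB := one_sub_lamq_ne hk (k + 1) (by omega)
  have hA' : (1 : ℂ) - q * q ^ k ≠ 0 := by rw [← pow_succ']; exact hA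
  have hB' : (1 : ℂ) - lam ^ 2 * q * q ^ k ≠ 0 := by
    intro h0; apply hB; rw [pow_succ']; linear_combination h0
  simp only [cTan, qPoch, Finset.prod_range_succ] at *
  field_simp
  ring

lemma cTan_zero (q lam : ℂ) : cTan q lam 0 = 1 := by simp [cTan, qPoch]

lemma summ_tan {q lam : ℂ} (hq : ‖q‖ < 1)
    (hk : ∀ k : ℕ, 1 ≤ k → lam ^ 2 * q ^ k ≠ 1) (w : ℤ) (hw : -1 ≤ w) :
    Summable fun k : ℕ => ‖cTan q lam k * q ^ ((k : ℤ) * w)‖ := by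
  by_cases hq0 : q = 0
  · apply summable_of_ne_finset_zero (s := ({0} : Finset ℕ))
    intro k hk0
    simp only [Finset.mem_singleton] at hk0
    have hc : cTan q lam k = 0 := by
      rw [cTan, hq0]
      rw [zero_pow (by omega : 3 * k ≠ 0)]
      simp
    simp [hc]
  · set f : ℕ → ℂ := fun k => cTan q lam k * q ^ ((k : ℤ) * w) with hf
    set r : ℕ → ℂ := fun k =>
      (1 + lam ^ 2 * q ^ (2 * k)) * q ^ (w + 3)
        / ((1 - q ^ (k + 1)) * (1 - lam ^ 2 * q ^ (k + 1))) with hr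
    have hD : ∀ k : ℕ, (1 - q ^ (k + 1)) * (1 - lam ^ 2 * q ^ (k + 1)) ≠ 0 := fun k =>
      mul_ne_zero (one_sub_q_pow_ne hq (k + 1) (by omega)) (one_sub_lamq_ne hk (k + 1) (by omega))
    have hrec : ∀ k : ℕ, f (k + 1) = f k * r k := by
      intro k
      rw [hf, hr]
      simp only
      rw [mul_div_assoc', eq_div_iff (hD k)]
      have e1 : (q : ℂ) ^ (((k : ℕ) + 1 : ℕ) * w : ℤ)
          = q ^ ((k : ℤ) * w) * q ^ w := by
        rw [← zpow_add₀ hq0]; congr 1; push_cast; ring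
      have e2 : (q : ℂ) ^ (w + 3) = q ^ w * q ^ (3 : ℕ) := by
        rw [zpow_add₀ hq0]; norm_num
      rw [e1, e2]
      linear_combination (q ^ ((k : ℤ) * w) * q ^ w) * cTan_succ hq hk k
    have hq' : ‖q‖ < 1 := hq
    have hq2 : Tendsto (fun k : ℕ => q ^ (2 * k)) atTop (𝓝 0) := by
      simp only [pow_mul]
      exact tendsto_pow_atTop_nhds_zero_of_norm_lt_one
        (by rw [norm_pow]; nlinarith [norm_nonneg q])
    have hqk : Tendsto (fun k : ℕ => q ^ (k + 1)) atTop (𝓝 0) := by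
      have := (tendsto_pow_atTop_nhds_zero_of_norm_lt_one hq').mul_const q
      simpa [pow_succ] using this
    have hrt : Tendsto r atTop (𝓝 (q ^ (w + 3))) := by
      have hnum : Tendsto (fun k : ℕ => (1 + lam ^ 2 * q ^ (2 * k)) * q ^ (w + 3)) atTop
          (𝓝 ((1 + lam ^ 2 * 0) * q ^ (w + 3))) :=
        (tendsto_const_nhds.add (hq2.const_mul _)).mul_const _
      have hden : Tendsto (fun k : ℕ => (1 - q ^ (k + 1)) * (1 - lam ^ 2 * q ^ (k + 1))) atTop
          (𝓝 ((1 - 0) * (1 - lam ^ 2 * 0))) :=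
        (tendsto_const_nhds.sub hqk).mul (tendsto_const_nhds.sub (hqk.const_mul _))
      have := hnum.div hden (by norm_num)
      simp only [mul_zero, add_zero, sub_zero, one_mul, mul_one, div_one] at this
      exact this
    set L : ℝ := ‖(q : ℂ) ^ (w + 3)‖ with hL
    have hL1 : L < 1 := by
      have h3 : ((w + 3).toNat : ℤ) = w + 3 := Int.toNat_of_nonneg (by omega)
      rw [hL, ← h3, zpow_natCast, norm_pow]
      exact pow_lt_one₀ (norm_nonneg q) hq' (by omega)
    have hL0 : 0 ≤ L := norm_nonneg _
    have hev : ∀ᶠ k in atTop, ‖r k‖ < (L + 1) / 2 :=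
      (hrt.norm).eventually (Filter.Tendsto.eventually_lt_const (by linarith) tendsto_id) |>.mono
        (fun k hk' => hk')
    apply summable_of_ratio_norm_eventually_le (r := (L + 1) / 2) (by linarith)
    filter_upwards [hev] with k hk'
    show ‖‖f (k + 1)‖‖ ≤ (L + 1) / 2 * ‖‖f k‖‖
    rw [norm_norm, norm_norm, hrec k, norm_mul]
    calc ‖f k‖ * ‖r k‖ ≤ ‖f k‖ * ((L + 1) / 2) := by
          gcongr
      _ = (L + 1) / 2 * ‖f k‖ := by ring

lemma main_tan {q lam : ℂ} (hq : ‖q‖ < 1) (hlam : lam ≠ 0)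
    (hk : ∀ k : ℕ, 1 ≤ k → lam ^ 2 * q ^ k ≠ 1) (w : ℤ) (hw : 1 ≤ w) :
    STan q lam w - ((1 + lam ^ 2) / lam) * STan q lam (w - 1) + STan q lam (w - 2)
      = q ^ (w + 1) * (STan q lam w + STan q lam (w - 2)) := by
  have hlw : ∀ v : ℤ, lam ^ v = lam ^ (w - 2) * lam ^ (v - (w - 2)) := by
    intro v
    rw [← zpow_add₀ hlam]; congr 1; ring
  by_cases hq0 : q = 0
  · have hS : ∀ v : ℤ, STan q lam v = lam ^ v := by
      intro v
      rw [STan]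
      rw [tsum_eq_single 0 (by
        intro k hk0
        have hc : cTan q lam k = 0 := by
          rw [cTan, hq0, zero_pow (by omega : 3 * k ≠ 0)]
          simp
        simp [hc])]
      simp [cTan_zero]
    rw [hS, hS, hS, hq0]
    rw [zero_zpow (w + 1) (by omega)]
    rw [hlw w, hlw (w - 1), hlw (w - 2)]
    have e1 : lam ^ (w - (w - 2)) = lam ^ (2 : ℕ) := by
      rw [show w - (w - 2) = ((2 : ℕ) : ℤ) by ring, zpow_natCast]
    have e2 : lam ^ (w - 1 - (w - 2)) = lam := by
      rw [show w - 1 - (w - 2) = (1 : ℤ) by ring, zpow_one]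
    have e3 : lam ^ (w - 2 - (w - 2)) = 1 := by
      rw [show w - 2 - (w - 2) = (0 : ℤ) by ring, zpow_zero]
    rw [e1, e2, e3]
    field_simp
    ring
  · set c := cTan q lam with hc
    have S0 : Summable (fun k : ℕ => c k * q ^ ((k : ℤ) * w)) :=
      (summ_tan hq hk w (by omega)).of_norm
    have S1 : Summable (fun k : ℕ => c k * q ^ ((k : ℤ) * (w - 1))) :=
      (summ_tan hq hk (w - 1) (by omega)).of_norm
    have S2 : Summable (fun k : ℕ => c k * q ^ ((k : ℤ) * (w - 2))) :=
      (summ_tan hq hk (w - 2) (by omega)).of_norm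
    have hsw : ∀ k : ℕ, (q : ℂ) ^ ((k : ℤ) * w) = q ^ ((k : ℤ) * (w - 2)) * q ^ (2 * k) := by
      intro k
      rw [← zpow_natCast q (2 * k), ← zpow_add₀ hq0]
      congr 1; push_cast; ring
    have hsw1 : ∀ k : ℕ, (q : ℂ) ^ ((k : ℤ) * (w - 1)) = q ^ ((k : ℤ) * (w - 2)) * q ^ k := by
      intro k
      rw [← zpow_natCast q k, ← zpow_add₀ hq0]
      congr 1; push_cast; ring
    set G : ℕ → ℂ := fun k =>
      lam ^ 2 * (c k * q ^ ((k : ℤ) * w)) - (1 + lam ^ 2) * (c k * q ^ ((k : ℤ) * (w - 1)))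
        + c k * q ^ ((k : ℤ) * (w - 2)) with hG
    set H : ℕ → ℂ := fun k =>
      q ^ (w + 1) * (lam ^ 2 * (c k * q ^ ((k : ℤ) * w)) + c k * q ^ ((k : ℤ) * (w - 2)))
      with hH
    have hGsum : Summable G := ((S0.mul_left _).sub (S1.mul_left _)).add S2
    have hG0 : G 0 = 0 := by
      simp [hG, hc, cTan_zero]
    have hGH : ∀ k : ℕ, G (k + 1) = H k := by
      intro k
      have e1 : ∀ v : ℤ, (q : ℂ) ^ ((((k + 1) : ℕ) : ℤ) * v)
          = q ^ ((k : ℤ) * v) * q ^ v := by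
        intro v
        rw [← zpow_add₀ hq0]; congr 1; push_cast; ring
      have key := cTan_succ hq hk k
      rw [← hc] at key
      have e3 : (q : ℂ) ^ (3 : ℕ) * q ^ ((k : ℤ) * (w - 2)) * q ^ (w - 2)
          = q ^ (w + 1) * q ^ ((k : ℤ) * (w - 2)) := by
        rw [← zpow_natCast q 3, ← zpow_add₀ hq0, ← zpow_add₀ hq0, ← zpow_add₀ hq0]
        congr 1; ring
      rw [hG, hH]
      simp only
      rw [e1 w, e1 (w - 1), e1 (w - 2), hsw k, hsw1 k]
      have ew : (q : ℂ) ^ w = q ^ (w - 2) * q ^ 2 := by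
        rw [← zpow_natCast q 2, ← zpow_add₀ hq0]; congr 1; ring
      have ew1 : (q : ℂ) ^ (w - 1) = q ^ (w - 2) * q := by
        rw [show w - 1 = w - 2 + 1 by ring, zpow_add₀ hq0, zpow_one]
      rw [ew, ew1]
      linear_combination (q ^ ((k : ℤ) * (w - 2)) * q ^ (w - 2)) * key
        + (c k * (1 + lam ^ 2 * q ^ (2 * k))) * e3
    have hstar : (∑' k, G k) = ∑' k, H k := by
      rw [Summable.tsum_eq_zero_add hGsum, hG0, zero_add]
      exact tsum_congr hGH
    have eG : (∑' k, G k)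
        = lam ^ 2 * (∑' k, c k * q ^ ((k : ℤ) * w))
          - (1 + lam ^ 2) * (∑' k, c k * q ^ ((k : ℤ) * (w - 1)))
          + ∑' k, c k * q ^ ((k : ℤ) * (w - 2)) := by
      rw [hG, Summable.tsum_add ((S0.mul_left _).sub (S1.mul_left _)) S2,
        Summable.tsum_sub (S0.mul_left _) (S1.mul_left _), tsum_mul_left, tsum_mul_left]
    have eH : (∑' k, H k)
        = q ^ (w + 1) * (lam ^ 2 * (∑' k, c k * q ^ ((k : ℤ) * w))
          + ∑' k, c k * q ^ ((k : ℤ) * (w - 2))) := by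
      rw [hH, tsum_mul_left, Summable.tsum_add (S0.mul_left _) S2, tsum_mul_left]
    rw [eG, eH] at hstar
    rw [STan, STan, STan, ← hc]
    rw [hlw w, hlw (w - 1), hlw (w - 2)]
    have e1 : lam ^ (w - (w - 2)) = lam ^ (2 : ℕ) := by
      rw [show w - (w - 2) = ((2 : ℕ) : ℤ) by ring, zpow_natCast]
    have e2 : lam ^ (w - 1 - (w - 2)) = lam := by
      rw [show w - 1 - (w - 2) = (1 : ℤ) by ring, zpow_one]
    have e3 : lam ^ (w - 2 - (w - 2)) = 1 := by
      rw [show w - 2 - (w - 2) = (0 : ℤ) by ring, zpow_zero]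
    rw [e1, e2, e3]
    have hdiv : (1 + lam ^ 2) / lam * (lam ^ (w - 2) * lam) = (1 + lam ^ 2) * lam ^ (w - 2) := by
      field_simp
    rw [mul_one]
    linear_combination lam ^ (w - 2) * hstar
      - (∑' k, c k * q ^ ((k : ℤ) * (w - 1))) * hdiv

theorem ansatz_qTangent (q lam : ℂ) (hq : ‖q‖ < 1) (hlam : lam ≠ 0)
    (hlam2 : 1 + lam ^ 2 ≠ 0)
    (hk : ∀ k : ℕ, 1 ≤ k → lam ^ 2 * q ^ k ≠ 1) :
    (∀ w : ℤ, -1 ≤ w → Summable fun k : ℕ => ‖cTan q lam k * q ^ ((k : ℤ) * w)‖) ∧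
    ∀ w : ℤ, 1 ≤ w →
      STan q lam w - ((1 + lam ^ 2) / lam) * STan q lam (w - 1) + STan q lam (w - 2)
        = q ^ (w + 1) * (STan q lam w + STan q lam (w - 2)) := by
  exact ⟨fun w hw => summ_tan hq hk w hw, fun w hw => main_tan hq hlam hk w hw⟩
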